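/- arXiv:1606.09070 — 2 statements merged into one kernel-verified Lean document; each statement's English description precedes it below -/
import Mathlib

section
/- Let F : ℝ^(2N) → ℝ ∪ {+∞} be proper and lower semicontinuous, let a > 0, and let z* = (x*, x*) ∈ dom F be a local minimizer of F. Suppose that for every δ > 0, F satisfies the growth condition F(y) ≥ F(z*) − (a/16)‖y₂ − x*‖² for all y = (y₁, y₂) ∈ ℝ^(2N) with y₂ ∉ B_δ(x*). Then F satisfies condition (H4) at z*: for any δ > 0 there exist 0 < ρ < δ and ν > 0 such that whenever z ∈ B_ρ(z*), F(z) < F(z*) + ν, and y₂ ∉ B_δ(x*), one has F(z) < F(y) + (a/4)‖z₂ − y₂‖². -/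
open Metric

/-- The growth condition of Lemma `lem:local-growth` implies condition (H4). -/
theorem stmt0 {N : ℕ}
    (F : (EuclideanSpace ℝ (Fin N)) × (EuclideanSpace ℝ (Fin N)) → EReal)
    (hbot : ∀ z, F z ≠ ⊥) (hproper : ∃ z, F z ≠ ⊤)
    (hlsc : LowerSemicontinuous F)
    (a : ℝ) (ha : 0 < a)
    (xstar : EuclideanSpace ℝ (Fin N))
    (hdom : F (xstar, xstar) ≠ ⊤)
    (hmin : ∃ ε > (0 : ℝ), ∀ z ∈ closedBall (xstar, xstar) ε, F (xstar, xstar) ≤ F z)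
    (hgrowth : ∀ δ > (0 : ℝ),
        ∀ y : (EuclideanSpace ℝ (Fin N)) × (EuclideanSpace ℝ (Fin N)),
        y.2 ∉ closedBall xstar δ →
        F (xstar, xstar) - (((a / 16) * ‖y.2 - xstar‖ ^ 2 : ℝ) : EReal) ≤ F y) :
    ∀ δ > (0 : ℝ), ∃ ρ > (0 : ℝ), ρ < δ ∧ ∃ ν > (0 : ℝ),
      ∀ z y : (EuclideanSpace ℝ (Fin N)) × (EuclideanSpace ℝ (Fin N)),
        z ∈ closedBall (xstar, xstar) ρ →
        F z < F (xstar, xstar) + ((ν : ℝ) : EReal) →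
        y.2 ∉ closedBall xstar δ →
        F z < F y + (((a / 4) * ‖z.2 - y.2‖ ^ 2 : ℝ) : EReal) := by
  intro δ hδ
  refine ⟨δ / 4, by positivity, by linarith, 5 * a / 64 * δ ^ 2, by positivity, ?_⟩
  intro z y hz hFz hy
  set r : ℝ := (F (xstar, xstar)).toReal with hrdef
  have hr : F (xstar, xstar) = (r : EReal) :=
    (EReal.coe_toReal hdom (hbot _)).symm
  set c : ℝ := ‖y.2 - xstar‖ with hc
  set d : ℝ := ‖z.2 - y.2‖ with hd
  -- distances
  have hzc : dist z.2 xstar ≤ δ / 4 :=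
    le_trans (by rw [Prod.dist_eq (x := z) (y := (xstar, xstar))]; exact le_max_right _ _) (mem_closedBall.mp hz)
  have hyc : δ < dist y.2 xstar := by
    simpa [mem_closedBall, not_le] using hy
  have hcd : c = dist y.2 xstar := by
    rw [hc, dist_eq_norm]
  have hdd : d = dist z.2 y.2 := by
    rw [hd, dist_eq_norm]
  have htri : dist y.2 xstar ≤ d + δ / 4 := by
    calc dist y.2 xstar ≤ dist y.2 z.2 + dist z.2 xstar := dist_triangle _ _ _
    _ ≤ dist z.2 y.2 + δ / 4 := by rw [dist_comm]; linarith
    _ = d + δ / 4 := by rw [hdd]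
  have hcδ : δ < c := by rw [hcd]; exact hyc
  have hd34 : 3 / 4 * c ≤ d := by
    rw [hcd]; linarith
  have hd0 : 0 ≤ d := norm_nonneg _
  -- key real inequality
  have key : r + 5 * a / 64 * δ ^ 2 ≤ (r - a / 16 * c ^ 2) + a / 4 * d ^ 2 := by
    have h1 : 0 ≤ a * (d ^ 2 - (3 / 4 * c) ^ 2) := by
      apply mul_nonneg ha.le
      nlinarith [mul_self_nonneg (d - 3 / 4 * c)]
    have h2 : 0 ≤ a * (c ^ 2 - δ ^ 2) := by
      apply mul_nonneg ha.le
      nlinarith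
    nlinarith [h1, h2]
  have hg := hgrowth δ hδ y hy
  rw [hr] at hg hFz
  have hg' : ((r - a / 16 * c ^ 2 : ℝ) : EReal) ≤ F y := by
    have hcast : ((r - a / 16 * c ^ 2 : ℝ) : EReal)
        = (r : EReal) - ((a / 16 * c ^ 2 : ℝ) : EReal) := by norm_cast
    rw [hcast]
    exact hg
  calc F z < ((r + 5 * a / 64 * δ ^ 2 : ℝ) : EReal) := by
        rw [EReal.coe_add]; exact hFz
    _ ≤ ((r - a / 16 * c ^ 2 : ℝ) : EReal) + ((a / 4 * d ^ 2 : ℝ) : EReal) := by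
        rw [← EReal.coe_add]; exact_mod_cast key
    _ ≤ F y + ((a / 4 * d ^ 2 : ℝ) : EReal) := by
        exact add_le_add_left hg' _
end

section
/- Let F : ℝ^(2N) → ℝ ∪ {+∞}, a > 0, and let (x^k) be a sequence in ℝ^N with z^k = (x^k, x^{k−1}) satisfying the sufficient decrease condition F(z^{k+1}) + a‖x^k − x^{k−1}‖² ≤ F(z^k) for all k. Suppose z* = (x*, x*) and δ > 0 are such that condition (H4) holds: whenever z ∈ B_ρ(z*), F(z) < F(z*) + ν, and y₂ ∉ B_δ(x*), one has F(z) < F(y) + (a/4)‖z₂ − y₂‖². Then for any k with z^k ∈ B_ρ(z*) and F(z*) < F(z^k) < F(z*) + ν, it follows that x^{k+1} ∈ B_δ(x*). -/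
open Metric

/-- Under the sufficient decrease condition (H1) and condition (H4),
iterates near the local minimizer stay in the `δ`-ball.
Here `x (k+1)` plays the role of `x^k`, so that `z^k = (x (k+1), x k)`. -/
theorem stmt1 {N : ℕ}
    (F : (EuclideanSpace ℝ (Fin N)) × (EuclideanSpace ℝ (Fin N)) → EReal)
    (a : ℝ) (ha : 0 < a)
    (x : ℕ → EuclideanSpace ℝ (Fin N))
    (hdec : ∀ k : ℕ,
      F (x (k + 2), x (k + 1)) + ((a * ‖x (k + 1) - x k‖ ^ 2 : ℝ) : EReal)
        ≤ F (x (k + 1), x k))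
    (xstar : EuclideanSpace ℝ (Fin N))
    (ρ ν δ : ℝ) (hρ : 0 < ρ) (hν : 0 < ν) (hδ : 0 < δ)
    (hH4 : ∀ z y : (EuclideanSpace ℝ (Fin N)) × (EuclideanSpace ℝ (Fin N)),
        z ∈ closedBall (xstar, xstar) ρ →
        F z < F (xstar, xstar) + ((ν : ℝ) : EReal) →
        y.2 ∉ closedBall xstar δ →
        F z < F y + (((a / 4) * ‖z.2 - y.2‖ ^ 2 : ℝ) : EReal))
    (k : ℕ)
    (hk : (x (k + 1), x k) ∈ closedBall (xstar, xstar) ρ)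
    (hlow : F (xstar, xstar) < F (x (k + 1), x k))
    (hup : F (x (k + 1), x k) < F (xstar, xstar) + ((ν : ℝ) : EReal)) :
    x (k + 2) ∈ closedBall xstar δ := by
  by_contra h
  set u := ‖x (k + 2) - x (k + 1)‖ with hu
  set v := ‖x (k + 1) - x k‖ with hv
  have hu0 : 0 ≤ u := norm_nonneg _
  have hv0 : 0 ≤ v := norm_nonneg _
  have hw : ‖x k - x (k + 2)‖ ≤ v + u := by
    calc ‖x k - x (k + 2)‖ = ‖(x k - x (k + 1)) + (x (k + 1) - x (k + 2))‖ := by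
          congr 1; abel
      _ ≤ ‖x k - x (k + 1)‖ + ‖x (k + 1) - x (k + 2)‖ := norm_add_le _ _
      _ = v + u := by simp [hu, hv, norm_sub_rev]
  have hw0 : 0 ≤ ‖x k - x (k + 2)‖ := norm_nonneg _
  have hreal : a / 4 * ‖x k - x (k + 2)‖ ^ 2 ≤ a * u ^ 2 + a * v ^ 2 := by
    nlinarith [sq_nonneg (u - v), mul_self_le_mul_self hw0 hw, ha.le, sq_nonneg (u + v), mul_pos ha (mul_pos ha ha)]
  have hH := hH4 (x (k + 1), x k) (x (k + 3), x (k + 2)) hk hup h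
  simp only at hH
  have h1 := hdec k
  have h2 := hdec (k + 1)
  have key : F (x (k + 3), x (k + 2)) + ((a * u ^ 2 + a * v ^ 2 : ℝ) : EReal)
      ≤ F (x (k + 1), x k) := by
    calc F (x (k + 3), x (k + 2)) + ((a * u ^ 2 + a * v ^ 2 : ℝ) : EReal)
        = (F (x (k + 3), x (k + 2)) + ((a * u ^ 2 : ℝ) : EReal)) + ((a * v ^ 2 : ℝ) : EReal) := by
          rw [EReal.coe_add, add_assoc]
      _ ≤ F (x (k + 2), x (k + 1)) + ((a * v ^ 2 : ℝ) : EReal) := by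
          exact add_le_add_left h2 _
      _ ≤ F (x (k + 1), x k) := h1
  have hle : F (x (k + 1), x k) < F (x (k + 1), x k) := by
    calc F (x (k + 1), x k)
        < F (x (k + 3), x (k + 2)) + ((a / 4 * ‖x k - x (k + 2)‖ ^ 2 : ℝ) : EReal) := hH
      _ ≤ F (x (k + 3), x (k + 2)) + ((a * u ^ 2 + a * v ^ 2 : ℝ) : EReal) := by
          exact add_le_add_right (EReal.coe_le_coe_iff.mpr hreal) _
      _ ≤ F (x (k + 1), x k) := key
  exact lt_irrefl _ hle
end
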